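/- For every n ≥ 1, 1/(2·Q_n) ≤ X_1·X_2·⋯·X_n ≤ 1/Q_n, and consequently |(1/n)·log Q_n + (1/n)·Σ_{k=1}^n log X_k| ≤ (log 2)/n. -/
import Mathlib


open Filter Topology

/-- `cfP a n` is the continued fraction numerator `P_{n-1}` of the sequence
`a 1, a 2, …` (so `cfP a 0 = P_{-1} = 1`, `cfP a 1 = P_0 = 0`, and
`P_n = a_n P_{n-1} + P_{n-2}` for `n ≥ 1`). -/
def cfP (a : ℕ → ℕ) : ℕ → ℤ
  | 0 => 1
  | 1 => 0
  | n + 2 => (a (n + 1) : ℤ) * cfP a (n + 1) + cfP a n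

/-- `cfQ a n` is the continued fraction denominator `Q_{n-1}` of the sequence
`a 1, a 2, …` (so `cfQ a 0 = Q_{-1} = 0`, `cfQ a 1 = Q_0 = 1`, and
`Q_n = a_n Q_{n-1} + Q_{n-2}` for `n ≥ 1`). -/
def cfQ (a : ℕ → ℕ) : ℕ → ℤ
  | 0 => 0
  | 1 => 1
  | n + 2 => (a (n + 1) : ℤ) * cfQ a (n + 1) + cfQ a n

/-- The `n`-th convergent `P_n / Q_n = [a_1, …, a_n]`. -/
noncomputable def cfConv (a : ℕ → ℕ) (n : ℕ) : ℝ :=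
  (cfP a (n + 1) : ℝ) / (cfQ a (n + 1) : ℝ)

/-- The sequence `a_k, a_{k+1}, a_{k+2}, …` (the tail of `a` starting at
index `k ≥ 1`), reindexed from `1`. -/
def cfShift (a : ℕ → ℕ) (k : ℕ) : ℕ → ℕ := fun i => a (i + k - 1)

lemma cfP_nonneg (a : ℕ → ℕ) : ∀ n, 0 ≤ cfP a n := by
  intro n
  induction n using Nat.strong_induction_on with
  | _ n ih =>
    match n with
    | 0 => simp [cfP]
    | 1 => simp [cfP]
    | (m+2) =>
      have h1 := ih (m+1) (by omega)
      have h2 := ih m (by omega)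
      show 0 ≤ (a (m + 1) : ℤ) * cfP a (m + 1) + cfP a m
      positivity

lemma cfQ_nonneg (a : ℕ → ℕ) : ∀ n, 0 ≤ cfQ a n := by
  intro n
  induction n using Nat.strong_induction_on with
  | _ n ih =>
    match n with
    | 0 => simp [cfQ]
    | 1 => simp [cfQ]
    | (m+2) =>
      have h1 := ih (m+1) (by omega)
      have h2 := ih m (by omega)
      show 0 ≤ (a (m + 1) : ℤ) * cfQ a (m + 1) + cfQ a m
      positivity

lemma cfQ_pos (a : ℕ → ℕ) (ha : ∀ k, 1 ≤ k → 1 ≤ a k) :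
    ∀ n, 1 ≤ n → 1 ≤ cfQ a n := by
  intro n hn
  induction n using Nat.strong_induction_on with
  | _ n ih =>
    match n, hn with
    | 1, _ => simp [cfQ]
    | (m+2), _ =>
      have h1 : 1 ≤ cfQ a (m+1) := ih (m+1) (by omega) (by omega)
      have h2 : 0 ≤ cfQ a m := cfQ_nonneg a m
      have h3 : (1 : ℤ) ≤ (a (m+1) : ℤ) := by exact_mod_cast ha (m+1) (by omega)
      show 1 ≤ (a (m + 1) : ℤ) * cfQ a (m + 1) + cfQ a m
      nlinarith

lemma cfQ_mono (a : ℕ → ℕ) (ha : ∀ k, 1 ≤ k → 1 ≤ a k) :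
    ∀ n, 1 ≤ n → cfQ a n ≤ cfQ a (n+1) := by
  intro n hn
  match n, hn with
  | 1, _ =>
    show cfQ a 1 ≤ cfQ a 2
    have h3 : (1 : ℤ) ≤ (a 1 : ℤ) := by exact_mod_cast ha 1 le_rfl
    simp [cfQ]
    linarith
  | (m+2), _ =>
    have h1 : 1 ≤ cfQ a (m+2) := cfQ_pos a ha (m+2) (by omega)
    have h2 : 0 ≤ cfQ a (m+1) := cfQ_nonneg a (m+1)
    have h3 : (1 : ℤ) ≤ (a (m+2) : ℤ) := by exact_mod_cast ha (m+2) (by omega)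
    show cfQ a (m+2) ≤ (a (m + 2) : ℤ) * cfQ a (m + 2) + cfQ a (m+1)
    nlinarith

/-- Shift identity: the numerator of `[b₁,…,bₙ]` equals the denominator of
`[b₂,…,bₙ]`, and the denominator is `b₁` times that plus the numerator. -/
lemma cf_shift_key (b : ℕ → ℕ) : ∀ n : ℕ,
    cfP b (n+2) = cfQ (fun i => b (i+1)) (n+1) ∧
    cfQ b (n+2) = (b 1 : ℤ) * cfQ (fun i => b (i+1)) (n+1) + cfP (fun i => b (i+1)) (n+1) := by
  have key : ∀ n : ℕ,
      (cfP b (n+2) = cfQ (fun i => b (i+1)) (n+1) ∧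
       cfQ b (n+2) = (b 1 : ℤ) * cfQ (fun i => b (i+1)) (n+1) + cfP (fun i => b (i+1)) (n+1)) ∧
      (cfP b (n+3) = cfQ (fun i => b (i+1)) (n+2) ∧
       cfQ b (n+3) = (b 1 : ℤ) * cfQ (fun i => b (i+1)) (n+2) + cfP (fun i => b (i+1)) (n+2)) := by
    intro n
    induction n with
    | zero =>
      refine ⟨⟨?_, ?_⟩, ?_, ?_⟩ <;> simp [cfP, cfQ] <;> ring
    | succ m ih =>
      obtain ⟨⟨h1, h2⟩, h3, h4⟩ := ih
      refine ⟨⟨h3, h4⟩, ?_, ?_⟩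
      · show (b (m+3) : ℤ) * cfP b (m+3) + cfP b (m+2) =
          ((fun i => b (i+1)) (m+2) : ℤ) * cfQ (fun i => b (i+1)) (m+2) + cfQ (fun i => b (i+1)) (m+1)
        rw [h1, h3]
      · show (b (m+3) : ℤ) * cfQ b (m+3) + cfQ b (m+2) =
          (b 1 : ℤ) * (((fun i => b (i+1)) (m+2) : ℤ) * cfQ (fun i => b (i+1)) (m+2) + cfQ (fun i => b (i+1)) (m+1)) +
          (((fun i => b (i+1)) (m+2) : ℤ) * cfP (fun i => b (i+1)) (m+2) + cfP (fun i => b (i+1)) (m+1))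
        rw [h2, h4]; ring
  exact fun n => (key n).1

/-- The convergent recursion: `[b₁,…,b_{n+2}] = 1/(b₁ + [b₂,…,b_{n+2}])`. -/
lemma cfConv_rec (b : ℕ → ℕ) (hb : ∀ k, 1 ≤ k → 1 ≤ b k) (n : ℕ) :
    cfConv b (n+1) = 1 / ((b 1 : ℝ) + cfConv (fun i => b (i+1)) n) := by
  obtain ⟨hP, hQ⟩ := cf_shift_key b n
  have hb' : ∀ k, 1 ≤ k → 1 ≤ (fun i => b (i+1)) k := fun k hk => hb (k+1) (by omega)
  have hQ'pos : (0 : ℝ) < (cfQ (fun i => b (i+1)) (n+1) : ℝ) := by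
    exact_mod_cast lt_of_lt_of_le zero_lt_one (cfQ_pos _ hb' (n+1) (by omega))
  have hP'nonneg : (0 : ℝ) ≤ (cfP (fun i => b (i+1)) (n+1) : ℝ) := by
    exact_mod_cast cfP_nonneg _ (n+1)
  have hb1 : (1 : ℝ) ≤ (b 1 : ℝ) := by exact_mod_cast hb 1 le_rfl
  unfold cfConv
  rw [hP, hQ]
  push_cast
  rw [div_eq_div_iff]
  · field_simp
  · nlinarith
  · have : (0:ℝ) < (b 1 : ℝ) + (cfP (fun i => b (i+1)) (n+1) : ℝ) / (cfQ (fun i => b (i+1)) (n+1) : ℝ) := by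
      have := div_nonneg hP'nonneg hQ'pos.le
      linarith
    linarith

lemma cfConv_nonneg (b : ℕ → ℕ) (n : ℕ) : 0 ≤ cfConv b n := by
  unfold cfConv
  apply div_nonneg
  · exact_mod_cast cfP_nonneg b (n+1)
  · exact_mod_cast cfQ_nonneg b (n+1)

/-- Tail recurrence: `X k = 1 / (a k + X (k+1))`. -/
lemma X_rec (a : ℕ → ℕ) (ha : ∀ k, 1 ≤ k → 1 ≤ a k)
    (X : ℕ → ℝ)
    (hX : ∀ k, 1 ≤ k → Tendsto (cfConv (cfShift a k)) atTop (𝓝 (X k))) :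
    (∀ k, 1 ≤ k → 0 ≤ X k) ∧
    (∀ k, 1 ≤ k → X k = 1 / ((a k : ℝ) + X (k+1))) := by
  have hXnonneg : ∀ k, 1 ≤ k → 0 ≤ X k := by
    intro k hk
    exact ge_of_tendsto' (hX k hk) (fun n => cfConv_nonneg _ n)
  refine ⟨hXnonneg, fun k hk => ?_⟩
  set b : ℕ → ℕ := cfShift a k with hb
  have hshift : (fun i => b (i+1)) = cfShift a (k+1) := by
    funext i
    simp only [hb, cfShift]
    congr 1
    omega
  have hb1 : b 1 = a k := by
    simp only [hb, cfShift]
    congr 1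
    omega
  have hbge : ∀ j, 1 ≤ j → 1 ≤ b j := by
    intro j hj
    exact ha (j + k - 1) (by omega)
  have h1 : Tendsto (fun n => cfConv b (n+1)) atTop (𝓝 (X k)) :=
    (hX k hk).comp (tendsto_add_atTop_nat 1)
  have heq : (fun n => cfConv b (n+1)) =
      fun n => 1 / ((a k : ℝ) + cfConv (cfShift a (k+1)) n) := by
    funext n
    rw [cfConv_rec b hbge n, hb1, hshift]
  have hden : (0 : ℝ) < (a k : ℝ) + X (k+1) := by
    have h1 : (1 : ℝ) ≤ (a k : ℝ) := by exact_mod_cast ha k hk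
    have h2 : 0 ≤ X (k+1) := hXnonneg (k+1) (by omega)
    linarith
  have h2 : Tendsto (fun n => 1 / ((a k : ℝ) + cfConv (cfShift a (k+1)) n)) atTop
      (𝓝 (1 / ((a k : ℝ) + X (k+1)))) := by
    apply Tendsto.div tendsto_const_nhds
    · exact tendsto_const_nhds.add (hX (k+1) (by omega))
    · exact ne_of_gt hden
  rw [heq] at h1
  exact tendsto_nhds_unique h1 h2

/-- For every `n ≥ 1`, `1/(2 Q_n) ≤ X_1 X_2 ⋯ X_n ≤ 1/Q_n`, and consequently
`|(1/n) log Q_n + (1/n) ∑_{k=1}^n log X_k| ≤ (log 2)/n`, where `X k` is the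
value of the infinite continued fraction `[a_k, a_{k+1}, …]`. -/
theorem cf_product_bounds (a : ℕ → ℕ) (ha : ∀ k, 1 ≤ k → 1 ≤ a k)
    (X : ℕ → ℝ)
    (hX : ∀ k, 1 ≤ k → Tendsto (cfConv (cfShift a k)) atTop (𝓝 (X k)))
    (n : ℕ) (hn : 1 ≤ n) :
    1 / (2 * (cfQ a (n + 1) : ℝ)) ≤ (∏ k ∈ Finset.Icc 1 n, X k) ∧
    (∏ k ∈ Finset.Icc 1 n, X k) ≤ 1 / (cfQ a (n + 1) : ℝ) ∧
    |(1 / (n : ℝ)) * Real.log ((cfQ a (n + 1) : ℝ)) +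
        (1 / (n : ℝ)) * ∑ k ∈ Finset.Icc 1 n, Real.log (X k)| ≤
      Real.log 2 / n := by
  obtain ⟨hXnn, hXrec⟩ := X_rec a ha X hX
  -- basic facts about X
  have hXden : ∀ k, 1 ≤ k → (1 : ℝ) ≤ (a k : ℝ) + X (k+1) := by
    intro k hk
    have h1 : (1 : ℝ) ≤ (a k : ℝ) := by exact_mod_cast ha k hk
    have h2 : 0 ≤ X (k+1) := hXnn (k+1) (by omega)
    linarith
  have hXpos : ∀ k, 1 ≤ k → 0 < X k := by
    intro k hk
    rw [hXrec k hk]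
    exact div_pos one_pos (by linarith [hXden k hk])
  have hXle : ∀ k, 1 ≤ k → X k ≤ 1 := by
    intro k hk
    rw [hXrec k hk]
    exact div_le_one_of_le₀ (hXden k hk) (by linarith [hXden k hk])
  -- the key product identity
  have key : ∀ m, 1 ≤ m →
      (∏ k ∈ Finset.Icc 1 m, X k) * ((cfQ a (m+1) : ℝ) + (cfQ a m : ℝ) * X (m+1)) = 1 := by
    intro m hm
    induction m, hm using Nat.le_induction with
    | base =>
      have : (∏ k ∈ Finset.Icc 1 1, X k) = X 1 := by simp
      rw [this, hXrec 1 le_rfl]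
      have h := hXden 1 le_rfl
      have hQ2 : (cfQ a 2 : ℝ) = (a 1 : ℝ) := by
        show (((a 1 : ℤ) * cfQ a 1 + cfQ a 0 : ℤ) : ℝ) = (a 1 : ℝ)
        simp [cfQ]
      have hQ1 : (cfQ a 1 : ℝ) = 1 := by simp [cfQ]
      rw [hQ2, hQ1]
      field_simp
    | succ m hm ih =>
      rw [Finset.prod_Icc_succ_top (by omega : 1 ≤ m + 1)]
      have hstep : X (m+1) * ((cfQ a (m+2) : ℝ) + (cfQ a (m+1) : ℝ) * X (m+2)) =
          (cfQ a (m+1) : ℝ) + (cfQ a m : ℝ) * X (m+1) := by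
        rw [hXrec (m+1) (by omega)]
        have h := hXden (m+1) (by omega)
        have hQ : (cfQ a (m+2) : ℝ) = (a (m+1) : ℝ) * (cfQ a (m+1) : ℝ) + (cfQ a m : ℝ) := by
          show (((a (m+1) : ℤ) * cfQ a (m+1) + cfQ a m : ℤ) : ℝ) = _
          push_cast
          ring
        rw [hQ]
        field_simp
        ring
      calc (∏ k ∈ Finset.Icc 1 m, X k) * X (m+1) * ((cfQ a (m+2) : ℝ) + (cfQ a (m+1) : ℝ) * X (m+2))
          = (∏ k ∈ Finset.Icc 1 m, X k) * (X (m+1) * ((cfQ a (m+2) : ℝ) + (cfQ a (m+1) : ℝ) * X (m+2))) := by ring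
        _ = (∏ k ∈ Finset.Icc 1 m, X k) * ((cfQ a (m+1) : ℝ) + (cfQ a m : ℝ) * X (m+1)) := by rw [hstep]
        _ = 1 := ih
  -- denominators
  set Q : ℝ := (cfQ a (n+1) : ℝ) with hQdef
  set D : ℝ := (cfQ a (n+1) : ℝ) + (cfQ a n : ℝ) * X (n+1) with hDdef
  have hQn : (1 : ℝ) ≤ (cfQ a n : ℝ) := by exact_mod_cast cfQ_pos a ha n hn
  have hQpos : (1 : ℝ) ≤ Q := by rw [hQdef]; exact_mod_cast cfQ_pos a ha (n+1) (by omega)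
  have hQmono : (cfQ a n : ℝ) ≤ Q := by rw [hQdef]; exact_mod_cast cfQ_mono a ha n hn
  have hX1 : 0 ≤ X (n+1) := hXnn (n+1) (by omega)
  have hX2 : X (n+1) ≤ 1 := hXle (n+1) (by omega)
  have hDlow : Q ≤ D := by
    have : 0 ≤ (cfQ a n : ℝ) * X (n+1) := by positivity
    rw [hDdef, hQdef]; linarith
  have hDhigh : D ≤ 2 * Q := by
    have : (cfQ a n : ℝ) * X (n+1) ≤ Q := by
      calc (cfQ a n : ℝ) * X (n+1) ≤ (cfQ a n : ℝ) * 1 := by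
            apply mul_le_mul_of_nonneg_left hX2 (by linarith)
        _ ≤ Q := by linarith
    rw [hDdef, hQdef]; linarith
  have hDpos : 0 < D := by linarith
  have hprod : (∏ k ∈ Finset.Icc 1 n, X k) = 1 / D := by
    rw [eq_div_iff (ne_of_gt hDpos), hDdef]
    exact key n hn
  have hlow : 1 / (2 * Q) ≤ (∏ k ∈ Finset.Icc 1 n, X k) := by
    rw [hprod]
    apply one_div_le_one_div_of_le hDpos hDhigh
  have hhigh : (∏ k ∈ Finset.Icc 1 n, X k) ≤ 1 / Q := by
    rw [hprod]
    apply one_div_le_one_div_of_le (by linarith) hDlow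
  refine ⟨hlow, hhigh, ?_⟩
  -- log part
  have hprodpos : 0 < (∏ k ∈ Finset.Icc 1 n, X k) := by
    apply Finset.prod_pos
    intro k hk
    exact hXpos k (Finset.mem_Icc.mp hk).1
  have hlogprod : Real.log (∏ k ∈ Finset.Icc 1 n, X k) =
      ∑ k ∈ Finset.Icc 1 n, Real.log (X k) := by
    apply Real.log_prod
    intro k hk
    exact ne_of_gt (hXpos k (Finset.mem_Icc.mp hk).1)
  have hl1 : Real.log (1 / (2 * Q)) ≤ Real.log (∏ k ∈ Finset.Icc 1 n, X k) :=
    Real.log_le_log (by positivity) hlow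
  have hl2 : Real.log (∏ k ∈ Finset.Icc 1 n, X k) ≤ Real.log (1 / Q) :=
    Real.log_le_log hprodpos hhigh
  have e1 : Real.log (1 / (2 * Q)) = -(Real.log 2 + Real.log Q) := by
    rw [one_div, Real.log_inv, Real.log_mul (by norm_num) (by linarith)]
  have e2 : Real.log (1 / Q) = -Real.log Q := by
    rw [one_div, Real.log_inv]
  rw [hlogprod] at hl1 hl2
  rw [e1] at hl1
  rw [e2] at hl2
  have habs : |Real.log Q + ∑ k ∈ Finset.Icc 1 n, Real.log (X k)| ≤ Real.log 2 := by
    rw [abs_le]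
    constructor <;> linarith
  have hnpos : (0 : ℝ) < n := by exact_mod_cast hn
  have : (1 / (n : ℝ)) * Real.log Q + (1 / (n : ℝ)) * ∑ k ∈ Finset.Icc 1 n, Real.log (X k) =
      (1 / (n : ℝ)) * (Real.log Q + ∑ k ∈ Finset.Icc 1 n, Real.log (X k)) := by ring
  rw [this, abs_mul, abs_of_pos (by positivity : (0:ℝ) < 1 / (n:ℝ))]
  calc (1 / (n : ℝ)) * |Real.log Q + ∑ k ∈ Finset.Icc 1 n, Real.log (X k)|
      ≤ (1 / (n : ℝ)) * Real.log 2 := by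
        apply mul_le_mul_of_nonneg_left habs (by positivity)
    _ = Real.log 2 / n := by ring
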